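/- arXiv:1111.1877 — 7 statements merged into one kernel-verified Lean document; each statement's English description precedes it below -/
import Mathlib

section
/- Let B be a complex symmetric n×n matrix with positive definite imaginary part Im B. Define the real 2n×2n matrix G = [[I,0],[−Re B, I]] · [[(Im B)⁻¹, 0],[0, Im B]] · [[I, −Re B],[0, I]] (in n×n block form). Then G is symmetric, positive definite, and symplectic in the sense that GΩG = Ω; consequently J := −ΩG satisfies J² = −I, JᵀΩJ = Ω, and ΩJ = G is positive definite, i.e. J is an Ω-compatible complex structure. -/
open Matrix

noncomputable section

/-- The standard symplectic matrix `Ω = [[0, −I],[I, 0]]` on `ℝ²ⁿ`. -/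
def Omg (n : ℕ) : Matrix (Fin n ⊕ Fin n) (Fin n ⊕ Fin n) ℝ :=
  fromBlocks 0 (-1) 1 0

/-- Componentwise real part of a complex matrix. -/
def matRe {m k : Type*} (A : Matrix m k ℂ) : Matrix m k ℝ := A.map Complex.re

/-- Componentwise imaginary part of a complex matrix. -/
def matIm {m k : Type*} (A : Matrix m k ℂ) : Matrix m k ℝ := A.map Complex.im

/-- The phase-space metric `G` associated with a complex symmetric matrix `B` with
`Im B > 0`, in `n×n` block form
`G = [[I,0],[−Re B, I]]·[[(Im B)⁻¹,0],[0, Im B]]·[[I,−Re B],[0,I]]`. -/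
def metricG {n : ℕ} (B : Matrix (Fin n) (Fin n) ℂ) :
    Matrix (Fin n ⊕ Fin n) (Fin n ⊕ Fin n) ℝ :=
  fromBlocks 1 0 (-(matRe B)) 1 * fromBlocks (matIm B)⁻¹ 0 0 (matIm B) *
    fromBlocks 1 (-(matRe B)) 0 1

lemma posDef_fromBlocks_diag {m k : Type*} [Fintype m] [Fintype k]
    {A : Matrix m m ℝ} {D : Matrix k k ℝ}
    (hA : A.PosDef) (hD : D.PosDef) : (fromBlocks A 0 0 D).PosDef := by
  rw [posDef_iff_dotProduct_mulVec]
  constructor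
  · have hAs : Aᵀ = A := conjTranspose_eq_transpose_of_trivial A ▸ hA.1.eq
    have hDs : Dᵀ = D := conjTranspose_eq_transpose_of_trivial D ▸ hD.1.eq
    rw [IsHermitian, conjTranspose_eq_transpose_of_trivial, fromBlocks_transpose,
      transpose_zero, transpose_zero, hAs, hDs]
  · intro x hx
    rw [fromBlocks_mulVec, dotProduct_block]
    simp only [Sum.elim_comp_inl, Sum.elim_comp_inr, zero_mulVec, add_zero, zero_add]
    rcases (by
      by_contra h
      push_neg at h
      apply hx; funext i; cases i
      · exact congrFun h.1 _
      · exact congrFun h.2 _ : x ∘ Sum.inl ≠ 0 ∨ x ∘ Sum.inr ≠ 0) with h | h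
    · exact add_pos_of_pos_of_nonneg (hA.dotProduct_mulVec_pos h) (hD.posSemidef.dotProduct_mulVec_nonneg _)
    · exact add_pos_of_nonneg_of_pos (hA.posSemidef.dotProduct_mulVec_nonneg _) (hD.dotProduct_mulVec_pos h)

lemma posDef_conj {m : Type*} [Fintype m] [DecidableEq m]
    {M P : Matrix m m ℝ} (hM : M.PosDef) (hP : IsUnit P) :
    (Pᵀ * M * P).PosDef := by
  rw [posDef_iff_dotProduct_mulVec]
  constructor
  · rw [IsHermitian, conjTranspose_eq_transpose_of_trivial]
    have hMs : Mᵀ = M := conjTranspose_eq_transpose_of_trivial M ▸ hM.1.eq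
    simp [transpose_mul, hMs, mul_assoc]
  · intro x hx
    have hPx : P *ᵥ x ≠ 0 := by
      intro h
      apply hx
      have := congrArg (fun v => P⁻¹ *ᵥ v) h
      simp only [mulVec_zero] at this
      rw [mulVec_mulVec, nonsing_inv_mul P ((isUnit_iff_isUnit_det P).mp hP), one_mulVec] at this
      exact this
    have := hM.dotProduct_mulVec_pos hPx
    simpa [star_trivial, dotProduct_mulVec, vecMul_mulVec, ← mul_assoc,
      mulVec_mulVec, vecMul_transpose] using this


/-- For a complex symmetric `n×n` matrix `B` with positive definite
imaginary part, the matrix `G` is symmetric, positive definite and symplectic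
(`GΩG = Ω`), and `J := −ΩG` satisfies `J² = −I`, `JᵀΩJ = Ω`, and `ΩJ = G` is positive
definite; i.e. `J` is an `Ω`-compatible complex structure. -/
theorem statement0 (n : ℕ) (B : Matrix (Fin n) (Fin n) ℂ)
    (hBsymm : Bᵀ = B) (hBim : (matIm B).PosDef) :
    (metricG B)ᵀ = metricG B ∧ (metricG B).PosDef ∧
      metricG B * Omg n * metricG B = Omg n ∧
      (-(Omg n) * metricG B) * (-(Omg n) * metricG B) = -1 ∧
      (-(Omg n) * metricG B)ᵀ * Omg n * (-(Omg n) * metricG B) = Omg n ∧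
      Omg n * (-(Omg n) * metricG B) = metricG B ∧
      (Omg n * (-(Omg n) * metricG B)).PosDef := by
  set X := matRe B with hXdef
  set Y := matIm B with hYdef
  have hX : Xᵀ = X := by rw [hXdef, matRe, ← transpose_map, hBsymm]
  have hY : Yᵀ = Y := by rw [hYdef, matIm, ← transpose_map, hBsymm]
  have hYu : IsUnit Y.det := isUnit_iff_ne_zero.mpr (ne_of_gt hBim.det_pos)
  have hYi : Y * Y⁻¹ = 1 := mul_nonsing_inv Y hYu
  have hYi' : Y⁻¹ * Y = 1 := nonsing_inv_mul Y hYu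
  have hYit : (Y⁻¹)ᵀ = Y⁻¹ := by rw [transpose_nonsing_inv, hY]
  have hG : metricG B = fromBlocks Y⁻¹ (-(Y⁻¹*X)) (-(X*Y⁻¹)) (X*Y⁻¹*X + Y) := by
    rw [metricG, ← hXdef, ← hYdef, fromBlocks_multiply, fromBlocks_multiply]
    rw [fromBlocks_inj]
    refine ⟨by noncomm_ring, by noncomm_ring, by noncomm_ring, by noncomm_ring⟩
  have hneg1 : (-1 : Matrix (Fin n ⊕ Fin n) (Fin n ⊕ Fin n) ℝ)
      = fromBlocks (-1) 0 0 (-1) := by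
    rw [← fromBlocks_one, fromBlocks_neg, neg_zero]
  have hΩ2 : Omg n * Omg n = -1 := by
    rw [Omg, fromBlocks_multiply, hneg1, fromBlocks_inj]
    refine ⟨by noncomm_ring, by noncomm_ring, by noncomm_ring, by noncomm_ring⟩
  have hΩt : (Omg n)ᵀ = -(Omg n) := by
    rw [Omg, fromBlocks_transpose, fromBlocks_neg, fromBlocks_inj]
    refine ⟨by simp, by simp, by simp, by simp⟩
  have hGt : (metricG B)ᵀ = metricG B := by
    rw [hG, fromBlocks_transpose, fromBlocks_inj]
    refine ⟨hYit, ?_, ?_, ?_⟩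
    · rw [transpose_neg, transpose_mul, hYit, hX]
    · rw [transpose_neg, transpose_mul, hYit, hX]
    · rw [transpose_add, hY, transpose_mul, transpose_mul, hYit, hX]
      noncomm_ring
  have hGΩG : metricG B * Omg n * metricG B = Omg n := by
    rw [hG, Omg, fromBlocks_multiply, fromBlocks_multiply, fromBlocks_inj]
    have simpset : True := trivial
    refine ⟨by noncomm_ring, ?_, ?_, ?_⟩
    · simp only [Matrix.mul_zero, Matrix.mul_neg, Matrix.mul_one, Matrix.zero_mul,
        Matrix.neg_mul, zero_add, add_zero, neg_neg, Matrix.mul_add,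
        Matrix.add_mul, Matrix.mul_assoc]
      rw [hYi']
      abel
    · simp only [Matrix.mul_zero, Matrix.mul_neg, Matrix.mul_one, Matrix.zero_mul,
        Matrix.neg_mul, zero_add, add_zero, neg_neg, Matrix.mul_add,
        Matrix.add_mul, Matrix.mul_assoc]
      rw [hYi]
      abel
    · simp only [Matrix.mul_zero, Matrix.mul_neg, Matrix.mul_one, Matrix.zero_mul,
        Matrix.neg_mul, zero_add, add_zero, neg_neg, Matrix.mul_add,
        Matrix.add_mul, Matrix.mul_assoc]
      rw [hYi', ← Matrix.mul_assoc Y Y⁻¹, hYi]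
      noncomm_ring
  have hGpd : (metricG B).PosDef := by
    have hP : IsUnit (fromBlocks 1 (-X) 0 1 : Matrix (Fin n ⊕ Fin n) (Fin n ⊕ Fin n) ℝ) := by
      rw [isUnit_iff_isUnit_det, det_fromBlocks_zero₂₁]
      simp
    have hD : (fromBlocks Y⁻¹ 0 0 Y).PosDef := posDef_fromBlocks_diag hBim.inv hBim
    have h := posDef_conj hD hP
    rw [fromBlocks_transpose, transpose_neg, hX, transpose_one, transpose_zero] at h
    rw [metricG, ← hXdef, ← hYdef]
    exact h
  have hΩJ : Omg n * (-(Omg n) * metricG B) = metricG B := by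
    rw [← Matrix.mul_assoc, Matrix.mul_neg, hΩ2, neg_neg, Matrix.one_mul]
  refine ⟨hGt, hGpd, hGΩG, ?_, ?_, hΩJ, ?_⟩
  · have : (-(Omg n) * metricG B) * (-(Omg n) * metricG B)
        = Omg n * (metricG B * Omg n * metricG B) := by noncomm_ring
    rw [this, hGΩG, hΩ2]
  · rw [transpose_mul, hGt, transpose_neg, hΩt, neg_neg]
    have h2 : metricG B * Omg n * Omg n * (-(Omg n) * metricG B)
        = metricG B * Omg n * -(Omg n * Omg n) * metricG B := by noncomm_ring
    rw [h2, hΩ2, neg_neg, Matrix.mul_one, hGΩG]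
  · rw [hΩJ]; exact hGpd
end
end

section
/- Let B be a complex symmetric n×n matrix with positive definite imaginary part, let z = (p,q) ∈ ℂⁿ×ℂⁿ, set (P,Q) := P_{J(B)}(z) = Re z + J(B) Im z, and set σ := ½(P+p)·(Q−q) ∈ ℂ. Then for every x ∈ ℝⁿ the complex quadratic phases satisfy p·(x−q) + ½(x−q)·B(x−q) = σ + P·(x−Q) + ½(x−Q)·B(x−Q); consequently, for every ħ > 0 the complexified coherent state satisfies ψ_z^B = e^{iσ/ħ} ψ_{(P,Q)}^B as functions on ℝⁿ. -/
open Matrix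

noncomputable section

/-- Componentwise real part of a complex vector. -/
def vecRe {m : Type*} (z : m → ℂ) : m → ℝ := fun i => (z i).re

/-- Componentwise imaginary part of a complex vector. -/
def vecIm {m : Type*} (z : m → ℂ) : m → ℝ := fun i => (z i).im

/-- The `Ω`-compatible complex structure `J(B)` associated with a complex symmetric
matrix `B` with `Im B > 0`, in `n×n` block form. -/
def JB {n : ℕ} (B : Matrix (Fin n) (Fin n) ℂ) :
    Matrix (Fin n ⊕ Fin n) (Fin n ⊕ Fin n) ℝ :=
  fromBlocks (-(matRe B) * (matIm B)⁻¹) (matIm B + matRe B * (matIm B)⁻¹ * matRe B)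
    (-(matIm B)⁻¹) ((matIm B)⁻¹ * matRe B)

/-- The projection `P_J(z) = Re z + J Im z` from `ℂ²ⁿ` to `ℝ²ⁿ`. -/
def PJ {n : ℕ} (J : Matrix (Fin n ⊕ Fin n) (Fin n ⊕ Fin n) ℝ)
    (z : Fin n ⊕ Fin n → ℂ) : Fin n ⊕ Fin n → ℝ :=
  vecRe z + J *ᵥ vecIm z

/-- The complexified coherent state `ψ_z^B` with (possibly complex) centre `z = (p,q)`:
`ψ_z^B(x) = (det Im B)^{1/4} (πħ)^{-n/4} exp[(i/ħ)(p·(x−q) + ½(x−q)·B(x−q))]`. -/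
def coherent {n : ℕ} (hbar : ℝ) (B : Matrix (Fin n) (Fin n) ℂ)
    (p q : Fin n → ℂ) (x : Fin n → ℝ) : ℂ :=
  (((matIm B).det ^ ((1 : ℝ)/4) / (Real.pi * hbar) ^ ((n : ℝ)/4) : ℝ) : ℂ) *
    Complex.exp ((Complex.I / (hbar : ℂ)) *
      (p ⬝ᵥ ((fun i => (x i : ℂ)) - q) +
        (1/2 : ℂ) * (((fun i => (x i : ℂ)) - q) ⬝ᵥ B *ᵥ ((fun i => (x i : ℂ)) - q))))

-- auxiliary lemmas

private lemma coe_mulVec {n : ℕ} (M : Matrix (Fin n) (Fin n) ℝ) (v : Fin n → ℝ) (i : Fin n) :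
    (((M *ᵥ v) i : ℝ) : ℂ) = (M.map Complex.ofReal *ᵥ fun j => ((v j : ℝ) : ℂ)) i := by
  exact RingHom.map_mulVec Complex.ofRealHom M v i

private lemma map_mul' {n : ℕ} (A C : Matrix (Fin n) (Fin n) ℝ) :
    (A * C).map Complex.ofReal = A.map Complex.ofReal * C.map Complex.ofReal :=
  Matrix.map_mul (f := Complex.ofRealHom)

private lemma map_add' {n : ℕ} (A C : Matrix (Fin n) (Fin n) ℝ) :
    (A + C).map Complex.ofReal = A.map Complex.ofReal + C.map Complex.ofReal := by
  ext i j; simp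

private lemma map_neg' {n : ℕ} (A : Matrix (Fin n) (Fin n) ℝ) :
    (-A).map Complex.ofReal = -(A.map Complex.ofReal) := by
  ext i j; simp

/-- Let `B` be complex symmetric with `Im B` positive definite, let
`z = (p,q) ∈ ℂⁿ×ℂⁿ`, set `(P,Q) := P_{J(B)}(z) = Re z + J(B) Im z` and
`σ := ½(P+p)·(Q−q)`. Then for every `x ∈ ℝⁿ` the complex quadratic phases satisfy
`p·(x−q) + ½(x−q)·B(x−q) = σ + P·(x−Q) + ½(x−Q)·B(x−Q)`; consequently for all `ħ > 0`,
`ψ_z^B = e^{iσ/ħ} ψ_{(P,Q)}^B` as functions on `ℝⁿ`. -/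
theorem statement1 (n : ℕ) (B : Matrix (Fin n) (Fin n) ℂ)
    (hBsymm : Bᵀ = B) (hBim : (matIm B).PosDef) (p q : Fin n → ℂ)
    (P Q : Fin n → ℝ)
    (hP : P = fun i => PJ (JB B) (Sum.elim p q) (Sum.inl i))
    (hQ : Q = fun i => PJ (JB B) (Sum.elim p q) (Sum.inr i))
    (σ : ℂ)
    (hσ : σ = (1/2 : ℂ) * (((fun i => (P i : ℂ)) + p) ⬝ᵥ ((fun i => (Q i : ℂ)) - q))) :
    (∀ x : Fin n → ℝ,
      p ⬝ᵥ ((fun i => (x i : ℂ)) - q) +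
          (1/2 : ℂ) * (((fun i => (x i : ℂ)) - q) ⬝ᵥ B *ᵥ ((fun i => (x i : ℂ)) - q)) =
        σ + (fun i => (P i : ℂ)) ⬝ᵥ ((fun i => (x i : ℂ)) - fun i => (Q i : ℂ)) +
          (1/2 : ℂ) * (((fun i => (x i : ℂ)) - fun i => (Q i : ℂ)) ⬝ᵥ B *ᵥ
            ((fun i => (x i : ℂ)) - fun i => (Q i : ℂ)))) ∧
    ∀ hbar : ℝ, 0 < hbar → ∀ x : Fin n → ℝ,
      coherent hbar B p q x =
        Complex.exp (Complex.I * σ / (hbar : ℂ)) *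
          coherent hbar B (fun i => (P i : ℂ)) (fun i => (Q i : ℂ)) x := by
  have hdet : IsUnit (matIm B).det := hBim.det_pos.ne'.isUnit
  have hTT : matIm B * (matIm B)⁻¹ = 1 := Matrix.mul_nonsing_inv _ hdet
  set S := matRe B with hSdef
  set T := matIm B with hTdef
  set Sc : Matrix (Fin n) (Fin n) ℂ := S.map Complex.ofReal with hScdef
  set Tc : Matrix (Fin n) (Fin n) ℂ := T.map Complex.ofReal with hTcdef
  set Tic : Matrix (Fin n) (Fin n) ℂ := (T⁻¹).map Complex.ofReal with hTicdef
  have hTTc : Tc * Tic = 1 := by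
    rw [hTcdef, hTicdef, ← map_mul', hTT]
    exact Matrix.map_one _ Complex.ofReal_zero Complex.ofReal_one
  set ac : Fin n → ℂ := fun i => ((vecIm p i : ℝ) : ℂ) with hacdef
  set bc : Fin n → ℂ := fun i => ((vecIm q i : ℝ) : ℂ) with hbcdef
  have hB : B = Sc + Complex.I • Tc := by
    ext i j
    simp [hScdef, hTcdef, hSdef, hTdef, matRe, matIm, Matrix.map_apply, Matrix.add_apply,
      Matrix.smul_apply, smul_eq_mul]
    rw [mul_comm]
    exact (Complex.re_add_im _).symm
  have hp : p = (fun i => ((vecRe p i : ℝ) : ℂ)) + Complex.I • ac := by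
    funext i
    simp [vecRe, hacdef, vecIm, smul_eq_mul]
    rw [mul_comm]
    exact (Complex.re_add_im _).symm
  have hq : q = (fun i => ((vecRe q i : ℝ) : ℂ)) + Complex.I • bc := by
    funext i
    simp [vecRe, hbcdef, vecIm, smul_eq_mul]
    rw [mul_comm]
    exact (Complex.re_add_im _).symm
  -- real-valued formulas for P and Q
  have hIl : vecIm (Sum.elim p q) ∘ Sum.inl = vecIm p := rfl
  have hIr : vecIm (Sum.elim p q) ∘ Sum.inr = vecIm q := rfl
  have hPreal : P = vecRe p + ((-S * T⁻¹) *ᵥ vecIm p + (T + S * T⁻¹ * S) *ᵥ vecIm q) := by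
    funext i
    rw [hP]
    simp only [PJ, JB, Matrix.fromBlocks_mulVec, Pi.add_apply, Sum.elim_inl, Sum.elim_inr,
      hIl, hIr, ← hSdef, ← hTdef, Matrix.neg_mul]
    rfl
  have hQreal : Q = vecRe q + ((-T⁻¹) *ᵥ vecIm p + (T⁻¹ * S) *ᵥ vecIm q) := by
    funext i
    rw [hQ]
    simp only [PJ, JB, Matrix.fromBlocks_mulVec, Pi.add_apply, Sum.elim_inl, Sum.elim_inr,
      hIl, hIr, ← hSdef, ← hTdef, Matrix.neg_mul]
    rfl
  -- complexified formulas
  have hPc : (fun i => ((P i : ℝ) : ℂ)) =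
      (fun i => ((vecRe p i : ℝ) : ℂ)) + ((-(Sc * Tic)) *ᵥ ac + (Tc + Sc * Tic * Sc) *ᵥ bc) := by
    funext i
    rw [hPreal]
    simp only [Pi.add_apply, Complex.ofReal_add, coe_mulVec]
    rw [show (-S * T⁻¹).map Complex.ofReal = -(Sc * Tic) by
        rw [Matrix.neg_mul, map_neg', map_mul'],
      show (T + S * T⁻¹ * S).map Complex.ofReal = Tc + Sc * Tic * Sc by
        rw [map_add', map_mul', map_mul']]
  have hQc : (fun i => ((Q i : ℝ) : ℂ)) =
      (fun i => ((vecRe q i : ℝ) : ℂ)) + ((-Tic) *ᵥ ac + (Tic * Sc) *ᵥ bc) := by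
    funext i
    rw [hQreal]
    simp only [Pi.add_apply, Complex.ofReal_add, coe_mulVec]
    rw [show (-T⁻¹).map Complex.ofReal = -Tic by rw [map_neg'],
      show (T⁻¹ * S).map Complex.ofReal = Tic * Sc by rw [map_mul']]
  -- the key identity P = p + B (Q - q)
  have hdiffQ : (fun i => ((Q i : ℝ) : ℂ)) - q =
      (-Tic) *ᵥ ac + (Tic * Sc) *ᵥ bc - Complex.I • bc := by
    rw [hQc]
    nth_rewrite 2 [hq]
    abel
  have hkey : (fun i => ((P i : ℝ) : ℂ)) = p + B *ᵥ ((fun i => ((Q i : ℝ) : ℂ)) - q) := by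
    rw [hdiffQ, hB, hPc]
    nth_rewrite 2 [hp]
    simp only [Matrix.add_mulVec, Matrix.mulVec_add, Matrix.mulVec_sub, Matrix.mulVec_neg,
      Matrix.neg_mulVec, Matrix.smul_mulVec, Matrix.mulVec_smul, Matrix.mulVec_mulVec,
      Matrix.add_mul, Matrix.smul_mul, smul_neg, smul_add, smul_sub]
    simp only [← Matrix.mul_assoc, hTTc, Matrix.one_mul, Matrix.one_mulVec]
    simp only [smul_smul, Complex.I_mul_I, neg_one_smul, neg_neg, smul_neg]
    module
  -- symmetry of B
  have hsym : ∀ u w : Fin n → ℂ, u ⬝ᵥ B *ᵥ w = w ⬝ᵥ B *ᵥ u := by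
    intro u w
    rw [Matrix.dotProduct_mulVec, ← hBsymm, Matrix.vecMul_transpose, dotProduct_comm]
    rw [hBsymm]
  -- part 1
  have h1 : ∀ x : Fin n → ℝ,
      p ⬝ᵥ ((fun i => (x i : ℂ)) - q) +
          (1/2 : ℂ) * (((fun i => (x i : ℂ)) - q) ⬝ᵥ B *ᵥ ((fun i => (x i : ℂ)) - q)) =
        σ + (fun i => (P i : ℂ)) ⬝ᵥ ((fun i => (x i : ℂ)) - fun i => (Q i : ℂ)) +
          (1/2 : ℂ) * (((fun i => (x i : ℂ)) - fun i => (Q i : ℂ)) ⬝ᵥ B *ᵥ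
            ((fun i => (x i : ℂ)) - fun i => (Q i : ℂ))) := by
    intro x
    have hsplit : (fun i => ((x i : ℝ) : ℂ)) - q =
        ((fun i => ((x i : ℝ) : ℂ)) - fun i => ((Q i : ℝ) : ℂ)) +
          ((fun i => ((Q i : ℝ) : ℂ)) - q) := by abel
    set v : Fin n → ℂ := (fun i => ((x i : ℝ) : ℂ)) - fun i => ((Q i : ℝ) : ℂ) with hv
    set d : Fin n → ℂ := (fun i => ((Q i : ℝ) : ℂ)) - q with hd
    rw [hσ, hkey, hsplit]
    simp only [dotProduct_add, add_dotProduct, Matrix.mulVec_add]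
    rw [show (B *ᵥ d) ⬝ᵥ d = d ⬝ᵥ (B *ᵥ d) from dotProduct_comm _ _,
      show (B *ᵥ d) ⬝ᵥ v = v ⬝ᵥ (B *ᵥ d) from dotProduct_comm _ _,
      show d ⬝ᵥ (B *ᵥ v) = v ⬝ᵥ (B *ᵥ d) from hsym d v]
    ring
  refine ⟨h1, ?_⟩
  intro hbar hpos x
  have key : ∀ c s t : ℂ,
      c * Complex.exp ((Complex.I / (hbar : ℂ)) * (s + t)) =
        Complex.exp (Complex.I * s / (hbar : ℂ)) *
          (c * Complex.exp ((Complex.I / (hbar : ℂ)) * t)) := by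
    intro c s t
    rw [show (Complex.I / (hbar : ℂ)) * (s + t) =
        Complex.I * s / (hbar : ℂ) + (Complex.I / (hbar : ℂ)) * t by ring,
      Complex.exp_add]
    ring
  simp only [coherent]
  rw [h1 x, add_assoc]
  exact key _ σ _
end
end

section
/- Let B be a complex symmetric n×n matrix with positive definite imaginary part and let z = (p,q) ∈ ℂⁿ×ℂⁿ. Write (P,Q) := P_{J(B)}(z) = Re z + J(B) Im z ∈ ℝⁿ×ℝⁿ. Then Q is a critical point of the imaginary part of S(x) = p·(x−q) + ½(x−q)·B(x−q), i.e. Im(p + B(Q−q)) = 0, the gradient of S at Q equals P, i.e. p + B(Q−q) = P, and hence B(Q−q) = P − p. -/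
open Matrix

noncomputable section

lemma mulVec_re {n : ℕ} (B : Matrix (Fin n) (Fin n) ℂ) (v : Fin n → ℂ) (i : Fin n) :
    ((B *ᵥ v) i).re = (matRe B *ᵥ vecRe v) i - (matIm B *ᵥ vecIm v) i := by
  simp [Matrix.mulVec, dotProduct, Complex.mul_re, Finset.sum_sub_distrib,
    matRe, matIm, vecRe, vecIm]

lemma mulVec_im {n : ℕ} (B : Matrix (Fin n) (Fin n) ℂ) (v : Fin n → ℂ) (i : Fin n) :
    ((B *ᵥ v) i).im = (matRe B *ᵥ vecIm v) i + (matIm B *ᵥ vecRe v) i := by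
  simp [Matrix.mulVec, dotProduct, Complex.mul_im, Finset.sum_add_distrib,
    matRe, matIm, vecRe, vecIm]

/-- Let `B` be complex symmetric with `Im B` positive definite, let
`z = (p,q) ∈ ℂⁿ×ℂⁿ` and `(P,Q) := P_{J(B)}(z)`. Then `Q` is a critical point of the
imaginary part of `S(x) = p·(x−q) + ½(x−q)·B(x−q)`, i.e. `Im(p + B(Q−q)) = 0`, the
gradient of `S` at `Q` equals `P`, i.e. `p + B(Q−q) = P`, and hence `B(Q−q) = P − p`. -/
theorem statement2 (n : ℕ) (B : Matrix (Fin n) (Fin n) ℂ)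
    (hBsymm : Bᵀ = B) (hBim : (matIm B).PosDef) (p q : Fin n → ℂ)
    (P Q : Fin n → ℝ)
    (hP : P = fun i => PJ (JB B) (Sum.elim p q) (Sum.inl i))
    (hQ : Q = fun i => PJ (JB B) (Sum.elim p q) (Sum.inr i)) :
    (∀ i, ((p + B *ᵥ ((fun j => (Q j : ℂ)) - q)) i).im = 0) ∧
    p + B *ᵥ ((fun j => (Q j : ℂ)) - q) = (fun i => (P i : ℂ)) ∧
    B *ᵥ ((fun j => (Q j : ℂ)) - q) = (fun i => (P i : ℂ)) - p := by
  set R := matRe B with hR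
  set M := matIm B with hM
  have hMdet : IsUnit M.det := isUnit_iff_ne_zero.2 (ne_of_gt hBim.det_pos)
  have hMM : ∀ x : Fin n → ℝ, M *ᵥ (M⁻¹ *ᵥ x) = x := fun x => by
    rw [mulVec_mulVec, Matrix.mul_nonsing_inv _ hMdet, one_mulVec]
  have helim : vecIm (Sum.elim p q) = Sum.elim (vecIm p) (vecIm q) := by
    funext j; cases j <;> rfl
  set u : Fin n → ℂ := (fun j => (Q j : ℂ)) - q with hu
  have hQ' : vecRe u = -(M⁻¹ *ᵥ vecIm p) + M⁻¹ *ᵥ (R *ᵥ vecIm q) := by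
    funext i
    simp [hu, vecRe, hQ, PJ, JB, helim, fromBlocks_mulVec, Matrix.neg_mulVec,
      ← Matrix.mulVec_mulVec]
    rfl
  have hIm_u : vecIm u = -(vecIm q) := by
    funext i; simp [hu, vecIm, vecRe]
  have hP' : ∀ i, P i = vecRe p i + ((-(R *ᵥ (M⁻¹ *ᵥ vecIm p))) i
      + (M *ᵥ vecIm q + R *ᵥ (M⁻¹ *ᵥ (R *ᵥ vecIm q))) i) := by
    intro i
    simp [hP, PJ, JB, helim, fromBlocks_mulVec, Matrix.neg_mulVec, Matrix.add_mulVec,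
      ← Matrix.mulVec_mulVec, vecRe]
    rfl
  have him : ∀ i, ((p + B *ᵥ u) i).im = 0 := by
    intro i
    have : ((B *ᵥ u) i).im = (R *ᵥ vecIm u) i + (M *ᵥ vecRe u) i := mulVec_im B u i
    simp only [Pi.add_apply, Complex.add_im, this, hQ', hIm_u, Matrix.mulVec_add,
      Matrix.mulVec_neg, hMM]
    simp [vecIm]
  have hre : ∀ i, ((p + B *ᵥ u) i).re = P i := by
    intro i
    have : ((B *ᵥ u) i).re = (R *ᵥ vecRe u) i - (M *ᵥ vecIm u) i := mulVec_re B u i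
    simp only [Pi.add_apply, Complex.add_re, this, hQ', hIm_u, Matrix.mulVec_add,
      Matrix.mulVec_neg, hMM, hP' i]
    simp [vecRe]
    ring
  have h2 : p + B *ᵥ u = (fun i => (P i : ℂ)) := by
    funext i
    exact Complex.ext (by simpa using hre i) (by simpa using him i)
  refine ⟨him, h2, ?_⟩
  funext i
  have := congrFun h2 i
  simp only [Pi.add_apply] at this
  simp [Pi.sub_apply, ← this]
end
end

section
/- Let B be a complex symmetric n×n matrix with positive definite imaginary part, and let J(B) be the associated Ω-compatible complex structure. Then ker P_{J(B)} = L_B, i.e. for z ∈ ℂⁿ×ℂⁿ one has Re z + J(B) Im z = 0 if and only if z = (Bq,q) for some q ∈ ℂⁿ. Equivalently, the block identity [[Re B, −Im B],[I, 0]] + J(B)·[[Im B, Re B],[0, I]] = 0 holds. -/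
open Matrix

noncomputable section

lemma vecRe_mulVec {n : ℕ} (B : Matrix (Fin n) (Fin n) ℂ) (q : Fin n → ℂ) :
    vecRe (B *ᵥ q) = matRe B *ᵥ vecRe q - matIm B *ᵥ vecIm q := by
  funext i
  simp [vecRe, vecIm, matRe, matIm, Matrix.mulVec, dotProduct,
    Complex.mul_re, Finset.sum_sub_distrib]

lemma vecIm_mulVec {n : ℕ} (B : Matrix (Fin n) (Fin n) ℂ) (q : Fin n → ℂ) :
    vecIm (B *ᵥ q) = matRe B *ᵥ vecIm q + matIm B *ᵥ vecRe q := by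
  funext i
  simp [vecRe, vecIm, matRe, matIm, Matrix.mulVec, dotProduct,
    Complex.mul_im, Finset.sum_add_distrib, mul_comm]

/-- Let `B` be complex symmetric with `Im B` positive definite and
`J(B)` the associated `Ω`-compatible complex structure. Then `ker P_{J(B)} = L_B`:
`Re z + J(B) Im z = 0` iff `z = (Bq,q)` for some `q ∈ ℂⁿ`. Equivalently, the block
identity `[[Re B, −Im B],[I,0]] + J(B)·[[Im B, Re B],[0,I]] = 0` holds. -/
theorem statement7 (n : ℕ) (B : Matrix (Fin n) (Fin n) ℂ)
    (hBsymm : Bᵀ = B) (hBim : (matIm B).PosDef) :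
    (∀ z : Fin n ⊕ Fin n → ℂ,
      PJ (JB B) z = 0 ↔ ∃ q : Fin n → ℂ, z = Sum.elim (B *ᵥ q) q) ∧
    fromBlocks (matRe B) (-(matIm B)) 1 0 +
      JB B * fromBlocks (matIm B) (matRe B) 0 1 = 0 := by
  set X := matRe B with hX
  set Y := matIm B with hY
  have hYdet : IsUnit Y.det := (ne_of_gt hBim.det_pos).isUnit
  have hYinv : Y⁻¹ * Y = 1 := Matrix.nonsing_inv_mul Y hYdet
  have hYinv' : Y * Y⁻¹ = 1 := Matrix.mul_nonsing_inv Y hYdet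
  have e11 : X + ((-X * Y⁻¹) * Y + (Y + X * Y⁻¹ * X) * 0) = 0 := by
    simp [Matrix.mul_assoc, hYinv]
  have e12 : -Y + ((-X * Y⁻¹) * X + (Y + X * Y⁻¹ * X) * 1) = 0 := by
    simp [Matrix.mul_assoc]
  have e21 : (1 : Matrix (Fin n) (Fin n) ℝ) + (-Y⁻¹ * Y + Y⁻¹ * X * 0) = 0 := by
    simp [hYinv]
  have e22 : (0 : Matrix (Fin n) (Fin n) ℝ) + (-Y⁻¹ * X + Y⁻¹ * X * 1) = 0 := by
    simp
  have hblock : fromBlocks X (-Y) 1 0 + JB B * fromBlocks Y X 0 1 = 0 := by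
    rw [JB, ← hX, ← hY, Matrix.fromBlocks_multiply, Matrix.fromBlocks_add,
      e11, e12, e21, e22, Matrix.fromBlocks_zero]
  refine ⟨fun z => ⟨fun h => ?_, ?_⟩, hblock⟩
  · -- forward direction
    set a : Fin n → ℂ := fun i => z (Sum.inl i) with ha
    set q : Fin n → ℂ := fun i => z (Sum.inr i) with hq
    have hz : z = Sum.elim a q := funext fun i => by cases i <;> rfl
    have hre : vecRe z = Sum.elim (vecRe a) (vecRe q) :=
      funext fun i => by cases i <;> rfl
    have him : vecIm z = Sum.elim (vecIm a) (vecIm q) :=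
      funext fun i => by cases i <;> rfl
    rw [PJ, hre, him, JB, ← hX, ← hY, Matrix.fromBlocks_mulVec] at h
    have htop : vecRe a + ((-X * Y⁻¹) *ᵥ vecIm a + (Y + X * Y⁻¹ * X) *ᵥ vecIm q) = 0 :=
      funext fun i => congrFun h (Sum.inl i)
    have hbot : vecRe q + (-Y⁻¹ *ᵥ vecIm a + (Y⁻¹ * X) *ᵥ vecIm q) = 0 :=
      funext fun i => congrFun h (Sum.inr i)
    have h1 : Y⁻¹ *ᵥ vecIm a = vecRe q + (Y⁻¹ * X) *ᵥ vecIm q := by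
      rw [Matrix.neg_mulVec] at hbot
      linear_combination -hbot
    have hIma : vecIm a = X *ᵥ vecIm q + Y *ᵥ vecRe q := by
      have h2 := congrArg (fun v => Y *ᵥ v) h1
      simp only [Matrix.mulVec_mulVec, Matrix.mulVec_add, ← Matrix.mul_assoc,
        hYinv', Matrix.one_mulVec, Matrix.one_mul] at h2
      linear_combination h2
    have hRea : vecRe a = X *ᵥ vecRe q - Y *ᵥ vecIm q := by
      rw [hIma] at htop
      simp only [Matrix.mulVec_add, Matrix.add_mulVec, Matrix.mulVec_mulVec,
        Matrix.neg_mul, Matrix.neg_mulVec, Matrix.mul_assoc, hYinv,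
        Matrix.mul_one] at htop
      linear_combination htop
    refine ⟨q, ?_⟩
    rw [hz]
    have hreq : vecRe a = vecRe (B *ᵥ q) := by rw [vecRe_mulVec, ← hX, ← hY, hRea]
    have himq : vecIm a = vecIm (B *ᵥ q) := by
      rw [vecIm_mulVec, ← hX, ← hY, hIma, add_comm]
    have haq : a = B *ᵥ q := funext fun i =>
      Complex.ext (congrFun hreq i) (congrFun himq i)
    rw [haq]
  · -- backward direction
    rintro ⟨q, rfl⟩
    have hre : vecRe (Sum.elim (B *ᵥ q) q) =
        fromBlocks X (-Y) 1 0 *ᵥ Sum.elim (vecRe q) (vecIm q) := by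
      rw [Matrix.fromBlocks_mulVec]
      simp only [Sum.elim_comp_inl, Sum.elim_comp_inr]
      funext i
      cases i with
      | inl i =>
        have := congrFun (vecRe_mulVec B q) i
        simpa [Matrix.neg_mulVec, vecRe, sub_eq_add_neg] using this
      | inr i => simp [vecRe]
    have him : vecIm (Sum.elim (B *ᵥ q) q) =
        fromBlocks Y X 0 1 *ᵥ Sum.elim (vecRe q) (vecIm q) := by
      rw [Matrix.fromBlocks_mulVec]
      simp only [Sum.elim_comp_inl, Sum.elim_comp_inr]
      funext i
      cases i with
      | inl i =>
        have := congrFun (vecIm_mulVec B q) i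
        simpa [vecIm, add_comm] using this
      | inr i => simp [vecIm]
    rw [PJ, hre, him, Matrix.mulVec_mulVec, ← Matrix.add_mulVec, hblock,
      Matrix.zero_mulVec]
end
end

section
/- Let J be an Ω-compatible complex structure, G := ΩJ, and define the hermitian sesquilinear form h(z,z') := z·G z̄' − i z·Ω z̄' on ℂ²ⁿ. Then P_J(z) := Re z + J Im z is a (real-linear, considered ℂ-antilinear-free) projection of ℂ²ⁿ onto ℝ²ⁿ whose kernel and image are h-orthogonal, i.e. h(z,z') = 0 for all z ∈ ker P_J and z' ∈ ℝ²ⁿ; consequently P_J is hermitian with respect to h: h(P_J z, z') = h(z, P_J z') for all z, z' ∈ ℂ²ⁿ. -/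
open Matrix

noncomputable section

/-- The complexification of `Ω`. -/
def OmgC (n : ℕ) : Matrix (Fin n ⊕ Fin n) (Fin n ⊕ Fin n) ℂ :=
  (Omg n).map Complex.ofReal

/-- Coercion of a real vector into `ℂ²ⁿ`. -/
def cv {m : Type*} (x : m → ℝ) : m → ℂ := fun i => ((x i : ℝ) : ℂ)

/-- The hermitian sesquilinear form `h(z,z') := z·G z̄' − i z·Ω z̄'` on `ℂ²ⁿ`
associated with `G = ΩJ` (the bar is componentwise conjugation). -/
def hform {n : ℕ} (J : Matrix (Fin n ⊕ Fin n) (Fin n ⊕ Fin n) ℝ)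
    (z z' : Fin n ⊕ Fin n → ℂ) : ℂ :=
  z ⬝ᵥ ((Omg n * J).map Complex.ofReal) *ᵥ star z' -
    Complex.I * (z ⬝ᵥ OmgC n *ᵥ star z')

set_option linter.unusedSectionVars false

section Aux

variable {m : Type*} [Fintype m] [DecidableEq m]

lemma cv_add (x y : m → ℝ) : cv (x + y) = cv x + cv y := by
  funext i; simp [cv]

lemma cv_zero : cv (0 : m → ℝ) = 0 := by
  funext i; simp [cv]

lemma cv_mulVec (A : Matrix m m ℝ) (y : m → ℝ) :
    cv (A *ᵥ y) = A.map Complex.ofReal *ᵥ cv y := by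
  funext i
  simp [cv, Matrix.mulVec, dotProduct, Matrix.map_apply]

lemma star_cv (x : m → ℝ) : star (cv x) = cv x := by
  funext i; simp [cv]

lemma z_decomp (z : m → ℂ) : cv (vecRe z) + Complex.I • cv (vecIm z) = z := by
  funext i
  simp [cv, vecRe, vecIm, Pi.add_apply, Pi.smul_apply, smul_eq_mul]
  rw [mul_comm, Complex.re_add_im]

lemma star_decomp (z : m → ℂ) : star z = cv (vecRe z) - Complex.I • cv (vecIm z) := by
  funext i
  simp only [Pi.star_apply, Pi.sub_apply, Pi.smul_apply, smul_eq_mul, cv, vecRe, vecIm]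
  apply Complex.ext <;> simp

lemma dp_trans (A B : Matrix m m ℂ) (u w : m → ℂ) :
    (A *ᵥ u) ⬝ᵥ (B *ᵥ w) = u ⬝ᵥ ((Aᵀ * B) *ᵥ w) := by
  rw [← Matrix.mulVec_mulVec, Matrix.dotProduct_mulVec u Aᵀ, Matrix.vecMul_transpose]

lemma map_mul_ofReal (A B : Matrix m m ℝ) :
    (A * B).map Complex.ofReal = A.map Complex.ofReal * B.map Complex.ofReal := by
  ext i j
  simp [Matrix.mul_apply, Matrix.map_apply]

lemma map_neg_ofReal (A : Matrix m m ℝ) :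
    (-A).map Complex.ofReal = -(A.map Complex.ofReal) := by
  ext i j; simp [Matrix.map_apply]

end Aux

/-- Let `J` be an `Ω`-compatible complex structure, `G := ΩJ`, and
`h(z,z') := z·G z̄' − i z·Ω z̄'`. Then `P_J(z) := Re z + J Im z` is a real-linear
projection of `ℂ²ⁿ` onto `ℝ²ⁿ` (it is the identity on `ℝ²ⁿ`), its kernel and image are
`h`-orthogonal (`h(z,z') = 0` for `z ∈ ker P_J` and `z' ∈ ℝ²ⁿ`), and consequently `P_J`
is hermitian with respect to `h`: `h(P_J z, z') = h(z, P_J z')` for all `z, z'`. -/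

theorem statement8 (n : ℕ) (J : Matrix (Fin n ⊕ Fin n) (Fin n ⊕ Fin n) ℝ)
    (hJsymp : Jᵀ * Omg n * J = Omg n) (hJsq : J * J = -1)
    (hJpos : (Omg n * J).PosDef) :
    (∀ x : Fin n ⊕ Fin n → ℝ, PJ J (cv x) = x) ∧
    (∀ z : Fin n ⊕ Fin n → ℂ, PJ J (cv (PJ J z)) = PJ J z) ∧
    (∀ z : Fin n ⊕ Fin n → ℂ, PJ J z = 0 →
      ∀ x : Fin n ⊕ Fin n → ℝ, hform J z (cv x) = 0) ∧
    (∀ z z' : Fin n ⊕ Fin n → ℂ,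
      hform J (cv (PJ J z)) z' = hform J z (cv (PJ J z'))) := by
  set JC := J.map Complex.ofReal with hJC
  set GC := (Omg n * J).map Complex.ofReal with hGC
  have hOC : OmgC n = (Omg n).map Complex.ofReal := rfl
  -- real matrix identities
  have r1 : Jᵀ * (Omg n * J) = Omg n := by rw [← mul_assoc, hJsymp]
  have r2 : Jᵀ * Omg n = -(Omg n * J) := by
    have h := congrArg (· * J) hJsymp
    simp only [mul_assoc, hJsq, mul_neg_one, mul_neg, mul_one] at h
    rw [← h, neg_neg]
  have r3 : (Omg n * J) * J = -(Omg n) := by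
    rw [mul_assoc, hJsq, mul_neg_one]
  -- complex matrix identities
  have hA : JCᵀ * GC = OmgC n := by
    rw [hJC, hGC, hOC, ← Matrix.transpose_map, ← map_mul_ofReal, r1]
  have hB : JCᵀ * OmgC n = -GC := by
    rw [hJC, hGC, hOC, ← Matrix.transpose_map, ← map_mul_ofReal, r2, map_neg_ofReal]
  have hC : GC * JC = -(OmgC n) := by
    rw [hJC, hGC, hOC, ← map_mul_ofReal, r3, map_neg_ofReal]
  have hD : OmgC n * JC = GC := by
    rw [hJC, hGC, hOC, ← map_mul_ofReal]
  -- left lemma : h(cv (PJ z), z') = h(z, z')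
  have L1 : ∀ z z' : Fin n ⊕ Fin n → ℂ, hform J (cv (PJ J z)) z' = hform J z z' := by
    intro z z'
    unfold hform PJ
    rw [← hGC, cv_add, cv_mulVec, ← hJC]
    set a := cv (vecRe z)
    set b := cv (vecIm z)
    set w := star z'
    rw [add_dotProduct, add_dotProduct,
      dp_trans JC GC b w, dp_trans JC (OmgC n) b w, hA, hB,
      Matrix.neg_mulVec, dotProduct_neg]
    conv_rhs => rw [← z_decomp z]
    rw [add_dotProduct, add_dotProduct,
      smul_dotProduct, smul_dotProduct]
    simp only [smul_eq_mul, a, b]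
    linear_combination (cv (vecIm z) ⬝ᵥ OmgC n *ᵥ w) * Complex.I_sq
  -- right lemma : h(z, cv (PJ z')) = h(z, z')
  have L2 : ∀ z z' : Fin n ⊕ Fin n → ℂ, hform J z (cv (PJ J z')) = hform J z z' := by
    intro z z'
    unfold hform
    rw [← hGC, star_cv]
    unfold PJ
    rw [cv_add, cv_mulVec, ← hJC]
    rw [Matrix.mulVec_add, Matrix.mulVec_add, Matrix.mulVec_mulVec, Matrix.mulVec_mulVec,
      hC, hD, Matrix.neg_mulVec,
      dotProduct_add, dotProduct_add, dotProduct_neg]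
    conv_rhs => rw [star_decomp z']
    rw [Matrix.mulVec_sub, Matrix.mulVec_smul, Matrix.mulVec_sub, Matrix.mulVec_smul,
      dotProduct_sub, dotProduct_sub,
      dotProduct_smul, dotProduct_smul]
    simp only [smul_eq_mul]
    linear_combination (-(z ⬝ᵥ OmgC n *ᵥ cv (vecIm z'))) * Complex.I_sq
  have h1 : ∀ y : Fin n ⊕ Fin n → ℝ, PJ J (cv y) = y := by
    intro y
    unfold PJ
    have hre : vecRe (cv y) = y := by funext j; simp [vecRe, cv]
    have him : vecIm (cv y) = 0 := by funext j; simp [vecIm, cv]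
    rw [hre, him, Matrix.mulVec_zero, add_zero]
  refine ⟨h1, fun z => h1 (PJ J z), ?_, ?_⟩
  · intro z hz x
    have := L1 z (cv x)
    rw [hz, cv_zero] at this
    rw [← this]
    unfold hform
    simp [zero_dotProduct]
  · intro z z'
    rw [L1, L2]
end
end

section
/- Let H : I → M_{2n}(ℂ) be continuous and symmetric-valued on an interval I containing 0, let S : I → M_{2n}(ℂ) solve Ṡ = ΩHS with S(0) = I, and let J₀ be an Ω-compatible complex structure. Suppose A(t) := Re S(t) − (Im S(t)) J₀ is invertible on [0,T). Then A satisfies Ȧ = [Ω Re H − Ω (Im H) J(t)] A where J(t) := A(t) J₀ A(t)⁻¹, and J(t) satisfies the Riccati equation J̇ = Ω(Re H)J − JΩ(Re H) + Ω(Im H) + JΩ(Im H)J with J(0) = J₀. -/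
open Matrix

noncomputable section

attribute [local instance] Matrix.linftyOpNormedRing Matrix.linftyOpNormedAlgebra

section Aux

variable {m : Type*} [Fintype m] [DecidableEq m]

lemma hasDerivWithinAt_matrix {𝔸 : Type*} [NormedRing 𝔸] [NormedAlgebra ℝ 𝔸]
    [FiniteDimensional ℝ 𝔸]
    {f : ℝ → Matrix m m 𝔸} {f' : Matrix m m 𝔸} {s : Set ℝ} {t : ℝ} :
    HasDerivWithinAt f f' s t ↔ ∀ i j, HasDerivWithinAt (fun x => f x i j) (f' i j) s t := by
  constructor
  · intro h i j
    let L : Matrix m m 𝔸 →ₗ[ℝ] 𝔸 :=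
      { toFun := fun M => M i j, map_add' := fun _ _ => rfl, map_smul' := fun _ _ => rfl }
    exact (LinearMap.toContinuousLinearMap L).hasFDerivAt.comp_hasDerivWithinAt t h
  · intro h
    let E : m → m → (𝔸 →ₗ[ℝ] Matrix m m 𝔸) := fun i j =>
      { toFun := fun c => Matrix.single i j c
        map_add' := by
          intro a b; ext i' j'; simp only [Matrix.single, Matrix.add_apply, of_apply]
          split <;> simp
        map_smul' := by
          intro a b; ext i' j'
          simp only [Matrix.single, Matrix.smul_apply, of_apply, RingHom.id_apply]
          split <;> simp }
    have key : ∀ i j, HasDerivWithinAt (fun x => Matrix.single i j (f x i j))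
        (Matrix.single i j (f' i j)) s t := fun i j =>
      (LinearMap.toContinuousLinearMap (E i j)).hasFDerivAt.comp_hasDerivWithinAt t (h i j)
    have h2 : HasDerivWithinAt (fun x => ∑ i, ∑ j, Matrix.single i j (f x i j))
        (∑ i, ∑ j, Matrix.single i j (f' i j)) s t :=
      HasDerivWithinAt.fun_sum fun i _ => HasDerivWithinAt.fun_sum fun j _ => key i j
    have e1 : (fun x => ∑ i, ∑ j, Matrix.single i j (f x i j)) = f := by
      funext x; exact (matrix_eq_sum_single (f x)).symm
    rw [e1, ← matrix_eq_sum_single f'] at h2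
    exact h2

lemma matRe_mul (P Q : Matrix m m ℂ) :
    matRe (P * Q) = matRe P * matRe Q - matIm P * matIm Q := by
  ext i j
  simp [matRe, matIm, Matrix.mul_apply, Complex.re_sum, Complex.mul_re,
    Finset.sum_sub_distrib]

lemma matIm_mul (P Q : Matrix m m ℂ) :
    matIm (P * Q) = matRe P * matIm Q + matIm P * matRe Q := by
  ext i j
  simp [matRe, matIm, Matrix.mul_apply, Complex.im_sum, Complex.mul_im,
    Finset.sum_add_distrib]

lemma matRe_realmap (P : Matrix m m ℝ) : matRe (P.map Complex.ofReal) = P := by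
  ext i j; simp [matRe]

lemma matIm_realmap (P : Matrix m m ℝ) : matIm (P.map Complex.ofReal) = 0 := by
  ext i j; simp [matIm]

lemma matRe_one : matRe (1 : Matrix m m ℂ) = 1 := by
  ext i j; simp [matRe, Matrix.one_apply, apply_ite Complex.re]

lemma matIm_one : matIm (1 : Matrix m m ℂ) = 0 := by
  ext i j; simp [matIm, Matrix.one_apply, apply_ite Complex.im]

end Aux

/-- Let `H` be continuous and symmetric-valued on an interval `I`
containing `0`, let `S` solve `Ṡ = ΩHS`, `S(0) = I`, and let `J₀` be an `Ω`-compatible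
complex structure. If `A(t) := Re S(t) − (Im S(t))J₀` is invertible on `[0,T)`, then
`Ȧ = [Ω Re H − Ω(Im H)J(t)]A` with `J(t) := A(t)J₀A(t)⁻¹`, and `J` satisfies the
Riccati equation `J̇ = Ω(Re H)J − JΩ(Re H) + Ω(Im H) + JΩ(Im H)J`, `J(0) = J₀`. -/
theorem statement14 (n : ℕ) (I : Set ℝ) (hI : I.OrdConnected) (h0I : (0 : ℝ) ∈ I)
    (T : ℝ) (hTI : Set.Ico (0 : ℝ) T ⊆ I)
    (H S : ℝ → Matrix (Fin n ⊕ Fin n) (Fin n ⊕ Fin n) ℂ)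
    (hHcont : ∀ i j, ContinuousOn (fun t => H t i j) I)
    (hHsymm : ∀ t ∈ I, (H t)ᵀ = H t)
    (hS : ∀ t ∈ I, ∀ i j,
      HasDerivWithinAt (fun s => S s i j) ((OmgC n * H t * S t) i j) I t)
    (hS0 : S 0 = 1)
    (J₀ : Matrix (Fin n ⊕ Fin n) (Fin n ⊕ Fin n) ℝ)
    (hJ₀symp : J₀ᵀ * Omg n * J₀ = Omg n) (hJ₀sq : J₀ * J₀ = -1)
    (hJ₀pos : (Omg n * J₀).PosDef)
    (A : ℝ → Matrix (Fin n ⊕ Fin n) (Fin n ⊕ Fin n) ℝ)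
    (hA : ∀ t, A t = matRe (S t) - matIm (S t) * J₀)
    (hAinv : ∀ t ∈ Set.Ico (0 : ℝ) T, IsUnit (A t))
    (J : ℝ → Matrix (Fin n ⊕ Fin n) (Fin n ⊕ Fin n) ℝ)
    (hJ : ∀ t, J t = A t * J₀ * (A t)⁻¹) :
    (∀ t ∈ Set.Ico (0 : ℝ) T, ∀ i j,
      HasDerivWithinAt (fun s => A s i j)
        (((Omg n * matRe (H t) - Omg n * matIm (H t) * J t) * A t) i j)
        (Set.Ico (0 : ℝ) T) t) ∧
    J 0 = J₀ ∧
    ∀ t ∈ Set.Ico (0 : ℝ) T, ∀ i j,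
      HasDerivWithinAt (fun s => J s i j)
        ((Omg n * matRe (H t) * J t - J t * (Omg n * matRe (H t)) + Omg n * matIm (H t) +
          J t * (Omg n * matIm (H t)) * J t) i j)
        (Set.Ico (0 : ℝ) T) t := by
  -- entrywise derivative of Re S and Im S
  have hRe : ∀ t ∈ I, HasDerivWithinAt (fun s => matRe (S s))
      (matRe (OmgC n * H t * S t)) I t := by
    intro t ht
    rw [hasDerivWithinAt_matrix]
    intro i j
    exact Complex.reCLM.hasFDerivAt.comp_hasDerivWithinAt t (hS t ht i j)
  have hIm : ∀ t ∈ I, HasDerivWithinAt (fun s => matIm (S s))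
      (matIm (OmgC n * H t * S t)) I t := by
    intro t ht
    rw [hasDerivWithinAt_matrix]
    intro i j
    exact Complex.imCLM.hasFDerivAt.comp_hasDerivWithinAt t (hS t ht i j)
  -- matrix-level derivative of A
  have hAder : ∀ t ∈ I, HasDerivWithinAt A
      (matRe (OmgC n * H t * S t) - matIm (OmgC n * H t * S t) * J₀) I t := by
    intro t ht
    have h := ((hRe t ht).sub ((hIm t ht).mul_const J₀))
    have e : ((fun s => matRe (S s)) - fun y => matIm (S y) * J₀) = A := by
      funext s; simp [hA s]
    rwa [e] at h
  -- the derivative of A rewritten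
  have hkey : ∀ t ∈ Set.Ico (0 : ℝ) T,
      matRe (OmgC n * H t * S t) - matIm (OmgC n * H t * S t) * J₀ =
      (Omg n * matRe (H t) - Omg n * matIm (H t) * J t) * A t := by
    intro t ht
    have hdet : IsUnit (A t).det := (isUnit_iff_isUnit_det _).1 (hAinv t ht)
    have hJA : J t * A t = A t * J₀ := by
      rw [hJ t, Matrix.mul_assoc, Matrix.nonsing_inv_mul _ hdet, Matrix.mul_one]
    have hre : matRe (OmgC n * H t * S t) =
        Omg n * (matRe (H t) * matRe (S t) - matIm (H t) * matIm (S t)) := by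
      rw [Matrix.mul_assoc, OmgC, matRe_mul, matRe_realmap, matIm_realmap, matRe_mul]
      simp
    have him : matIm (OmgC n * H t * S t) =
        Omg n * (matRe (H t) * matIm (S t) + matIm (H t) * matRe (S t)) := by
      rw [Matrix.mul_assoc, OmgC, matIm_mul, matRe_realmap, matIm_realmap, matIm_mul]
      simp
    rw [hre, him, Matrix.sub_mul, Matrix.mul_assoc (Omg n * matIm (H t)), hJA, hA t]
    simp only [Matrix.mul_sub, Matrix.sub_mul, Matrix.mul_add, Matrix.add_mul,
      Matrix.mul_assoc, hJ₀sq, Matrix.mul_neg, Matrix.mul_one, Matrix.neg_mul]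
    abel
  refine ⟨?_, ?_, ?_⟩
  · intro t ht i j
    have h := (hAder t (hTI ht)).mono hTI
    rw [hkey t ht] at h
    exact hasDerivWithinAt_matrix.1 h i j
  · have hA0 : A 0 = 1 := by rw [hA 0, hS0, matRe_one, matIm_one]; simp
    rw [hJ 0, hA0]; simp
  · intro t ht
    set M := Omg n * matRe (H t) - Omg n * matIm (H t) * J t with hM
    have hdet : IsUnit (A t).det := (isUnit_iff_isUnit_det _).1 (hAinv t ht)
    have hAB : A t * (A t)⁻¹ = 1 := Matrix.mul_nonsing_inv _ hdet
    have hBA : (A t)⁻¹ * A t = 1 := Matrix.nonsing_inv_mul _ hdet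
    have hAder' : HasDerivWithinAt A (M * A t) (Set.Ico (0 : ℝ) T) t := by
      have h := (hAder t (hTI ht)).mono hTI
      rwa [hkey t ht] at h
    set u := (hAinv t ht).unit with hu
    have huA : (u : Matrix (Fin n ⊕ Fin n) (Fin n ⊕ Fin n) ℝ) = A t := (hAinv t ht).unit_spec
    have hinv : HasDerivWithinAt (fun s => (A s)⁻¹)
        (-((A t)⁻¹ * (M * A t) * (A t)⁻¹)) (Set.Ico (0 : ℝ) T) t := by
      have hF0 : HasFDerivAt (Ring.inverse)
          (-(ContinuousLinearMap.mulLeftRight ℝ _ ↑u⁻¹ ↑u⁻¹)) (A t) :=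
        huA ▸ hasFDerivAt_ringInverse u
      have hF := hF0.comp_hasDerivWithinAt (x := t) (f := A) hAder'
      have e1 : (Ring.inverse ∘ A : ℝ → Matrix (Fin n ⊕ Fin n) (Fin n ⊕ Fin n) ℝ)
          = fun s => (A s)⁻¹ := by
        funext s; simp [Function.comp, Matrix.nonsing_inv_eq_ringInverse]
      have e2 : ((-ContinuousLinearMap.mulLeftRight ℝ _ ↑u⁻¹ ↑u⁻¹) (M * A t))
          = -((A t)⁻¹ * (M * A t) * (A t)⁻¹) := by
        simp [ContinuousLinearMap.mulLeftRight_apply, Matrix.coe_units_inv, huA]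
      rw [e1, e2] at hF
      exact hF
    have hprod : HasDerivWithinAt (fun s => A s * J₀ * (A s)⁻¹)
        ((M * A t * J₀) * (A t)⁻¹ + (A t * J₀) * (-((A t)⁻¹ * (M * A t) * (A t)⁻¹)))
        (Set.Ico (0 : ℝ) T) t := (hAder'.mul_const J₀).mul hinv
    have hJJ : J t * J t = -1 := by
      have e : J t * J t = A t * J₀ * ((A t)⁻¹ * A t) * J₀ * (A t)⁻¹ := by
        rw [hJ t]; noncomm_ring
      rw [e, hBA, Matrix.mul_one, Matrix.mul_assoc (A t) J₀ J₀, hJ₀sq]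
      simp only [Matrix.mul_neg, Matrix.mul_one, Matrix.neg_mul, hAB]
    have hval : (M * A t * J₀) * (A t)⁻¹ + (A t * J₀) * (-((A t)⁻¹ * (M * A t) * (A t)⁻¹))
        = M * J t - J t * M := by
      rw [hJ t]
      simp only [Matrix.mul_neg, Matrix.neg_mul, Matrix.mul_assoc, hAB, Matrix.mul_one,
        sub_eq_add_neg]
    have hfinal : M * J t - J t * M =
        Omg n * matRe (H t) * J t - J t * (Omg n * matRe (H t)) + Omg n * matIm (H t) +
          J t * (Omg n * matIm (H t)) * J t := by
      rw [hM]
      simp only [Matrix.sub_mul, Matrix.mul_sub, Matrix.mul_assoc, hJJ, Matrix.mul_neg,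
        Matrix.mul_one]
      abel
    rw [hval, hfinal] at hprod
    have efun : (fun s => A s * J₀ * (A s)⁻¹) = J := by
      funext s; rw [hJ s]
    rw [efun] at hprod
    exact hasDerivWithinAt_matrix.1 hprod
end
end

section
/- Let γ > 0 and let S ∈ M_{2n}(ℝ) be symmetric, positive definite, and symplectic (SΩS = Ω). Consider the constant Hamiltonian matrix H with Re H = 0 and Im H = −γS. Then for any real symmetric positive definite symplectic matrix G₀ for which tanh(γt)G₀ + S is invertible for all t ≥ 0, the matrix function G(t) := (G₀ + tanh(γt)S)(tanh(γt)G₀ + S)⁻¹ S satisfies G(0) = G₀ and the Riccati equation Ġ = (Re H)ΩG − GΩ(Re H) − Im H + GΩᵀ(Im H)ΩG, i.e. Ġ = γS − γGΩᵀSΩG. In particular the constant function G(t) = S is a solution (the stationary metric), since S = SΩᵀSΩS. -/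
open Matrix

noncomputable section

attribute [local instance] Matrix.linftyOpNormedRing Matrix.linftyOpNormedAlgebra

/-- Derivative of the real hyperbolic tangent. -/
lemma aux_hasDerivAt_tanh (x : ℝ) : HasDerivAt Real.tanh (1 - Real.tanh x ^ 2) x := by
  have hc := (Real.cosh_pos x).ne'
  have h := (Real.hasDerivAt_sinh x).div (Real.hasDerivAt_cosh x) hc
  have hfun : Real.tanh = fun y => Real.sinh y / Real.cosh y :=
    funext fun y => Real.tanh_eq_sinh_div_cosh y
  have hval : 1 - Real.tanh x ^ 2 =
      (Real.cosh x * Real.cosh x - Real.sinh x * Real.sinh x) / Real.cosh x ^ 2 := by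
    rw [Real.tanh_eq_sinh_div_cosh]
    field_simp
  rw [hval, hfun]; exact h

/-- Let `γ > 0` and `S` be real symmetric, positive definite and
symplectic, and consider the Hamiltonian matrix `H` with `Re H = 0`, `Im H = −γS`.
For any real symmetric positive definite symplectic `G₀` such that `tanh(γt)G₀ + S` is
invertible for all `t ≥ 0`, the matrix function
`G(t) := (G₀ + tanh(γt)S)(tanh(γt)G₀ + S)⁻¹S` satisfies `G(0) = G₀` and the Riccati
equation `Ġ = γS − γGΩᵀSΩG`. In particular the constant function `G(t) = S` is a
(stationary) solution, since `S = SΩᵀSΩS`. -/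
theorem statement19 (n : ℕ) (γ : ℝ) (hγ : 0 < γ)
    (S : Matrix (Fin n ⊕ Fin n) (Fin n ⊕ Fin n) ℝ)
    (hSsymm : Sᵀ = S) (hSpos : S.PosDef) (hSsymp : Sᵀ * Omg n * S = Omg n)
    (G₀ : Matrix (Fin n ⊕ Fin n) (Fin n ⊕ Fin n) ℝ)
    (hG₀symm : G₀ᵀ = G₀) (hG₀pos : G₀.PosDef) (hG₀symp : G₀ᵀ * Omg n * G₀ = Omg n)
    (hinv : ∀ t : ℝ, 0 ≤ t → IsUnit (Real.tanh (γ * t) • G₀ + S))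
    (G : ℝ → Matrix (Fin n ⊕ Fin n) (Fin n ⊕ Fin n) ℝ)
    (hG : ∀ t, G t = (G₀ + Real.tanh (γ * t) • S) * (Real.tanh (γ * t) • G₀ + S)⁻¹ * S) :
    G 0 = G₀ ∧
    (∀ t : ℝ, 0 ≤ t → ∀ i j,
      HasDerivWithinAt (fun s => G s i j)
        ((γ • S - γ • (G t * (Omg n)ᵀ * S * Omg n * G t)) i j) (Set.Ici (0 : ℝ)) t) ∧
    S = S * (Omg n)ᵀ * S * Omg n * S := by
  haveI : CompleteSpace (Matrix (Fin n ⊕ Fin n) (Fin n ⊕ Fin n) ℝ) :=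
    FiniteDimensional.complete ℝ _
  have hSdet : IsUnit S.det := isUnit_iff_ne_zero.2 hSpos.det_pos.ne'
  -- `Ωᵀ = -Ω` and `Ω * Ω = -1`
  have hOT : (Omg n)ᵀ = -Omg n := by
    simp [Omg, fromBlocks_transpose, fromBlocks_neg]
  have hOO : Omg n * Omg n = -1 := by
    simp [Omg, fromBlocks_multiply, ← fromBlocks_one, fromBlocks_neg]
  -- `S Ωᵀ S Ω = 1`
  have hSO : S * (Omg n)ᵀ * S * Omg n = 1 := by
    have h1 : S * Omg n * S = Omg n := by have h := hSsymp; rwa [hSsymm] at h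
    calc S * (Omg n)ᵀ * S * Omg n = -(S * Omg n * S * Omg n) := by
          rw [hOT]; noncomm_ring
      _ = -(Omg n * Omg n) := by rw [h1]
      _ = 1 := by rw [hOO, neg_neg]
  refine ⟨?_, ?_, ?_⟩
  · rw [hG 0]
    simp only [mul_zero, Real.tanh_zero, zero_smul, add_zero, zero_add]
    rw [mul_assoc, Matrix.nonsing_inv_mul S hSdet, mul_one]
  · intro t ht i j
    set τ : ℝ := Real.tanh (γ * t) with hτdef
    set τ' : ℝ := γ * (1 - τ ^ 2) with hτ'def
    -- derivative of `s ↦ tanh (γ s)`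
    have hτ : HasDerivAt (fun s : ℝ => Real.tanh (γ * s)) τ' t := by
      have h1 : HasDerivAt (fun s : ℝ => γ * s) γ t := by
        simpa using (hasDerivAt_id t).const_mul γ
      have := (aux_hasDerivAt_tanh (γ * t)).comp t h1
      have e : τ' = (1 - Real.tanh (γ * t) ^ 2) * γ := by rw [hτ'def, hτdef]; ring
      rw [e]; exact this
    obtain ⟨u, hu⟩ := hinv t ht
    set N : Matrix (Fin n ⊕ Fin n) (Fin n ⊕ Fin n) ℝ := ↑u⁻¹ with hN
    set A : Matrix (Fin n ⊕ Fin n) (Fin n ⊕ Fin n) ℝ := G₀ + τ • S with hA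
    set M : Matrix (Fin n ⊕ Fin n) (Fin n ⊕ Fin n) ℝ := τ • G₀ + S with hM
    have huM : (u : Matrix (Fin n ⊕ Fin n) (Fin n ⊕ Fin n) ℝ) = M := hu
    have hMN : M * N = 1 := by rw [← huM, hN, Units.mul_inv]
    have hNM : N * M = 1 := by rw [← huM, hN, Units.inv_mul]
    have hNval : Ring.inverse M = N := by rw [← huM, Ring.inverse_unit]
    -- G as a `Ring.inverse` expression
    have hFG : ∀ s, G s = (G₀ + Real.tanh (γ * s) • S) *
        Ring.inverse (Real.tanh (γ * s) • G₀ + S) * S := by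
      intro s; rw [hG s, Matrix.nonsing_inv_eq_ringInverse]
    -- derivative of the matrix-valued function
    have hf₁ : HasDerivWithinAt (fun s : ℝ => G₀ + Real.tanh (γ * s) • S)
        (τ' • S) (Set.Ici (0:ℝ)) t :=
      ((hτ.smul_const S).const_add G₀).hasDerivWithinAt
    have hMder : HasDerivWithinAt (fun s : ℝ => Real.tanh (γ * s) • G₀ + S)
        (τ' • G₀) (Set.Ici (0:ℝ)) t :=
      ((hτ.smul_const G₀).add_const S).hasDerivWithinAt
    have hf₂ : HasDerivWithinAt
        (fun s : ℝ => Ring.inverse (Real.tanh (γ * s) • G₀ + S))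
        (-(N * (τ' • G₀) * N)) (Set.Ici (0:ℝ)) t := by
      have hfd := (hasFDerivAt_ringInverse (𝕜 := ℝ) u).comp_hasDerivWithinAt_of_eq
        (x := t) (f := fun s : ℝ => Real.tanh (γ * s) • G₀ + S)
        (f' := τ' • G₀) (s := Set.Ici (0:ℝ)) hMder (by rw [huM, hM])
      simp [Function.comp, ContinuousLinearMap.neg_apply,
        ContinuousLinearMap.mulLeftRight_apply, hN] at hfd ⊢
      exact hfd
    have hF : HasDerivWithinAt
        (fun s : ℝ => (G₀ + Real.tanh (γ * s) • S) *
          Ring.inverse (Real.tanh (γ * s) • G₀ + S) * S)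
        ((τ' • S * N + A * -(N * (τ' • G₀) * N)) * S) (Set.Ici (0:ℝ)) t := by
      have := (hf₁.mul hf₂).mul_const S
      have hNval' : Ring.inverse (Real.tanh (γ * t) • G₀ + S) = N := hNval
      simp only [hNval'] at this
      simp [hA, hM, ← hτdef] at this ⊢
      exact this
    -- identify the derivative with the Riccati right-hand side
    have hGt : G t = A * N * S := by rw [hFG t, ← hτdef, ← hM, hNval, ← hA]
    have hkey' : (τ' • S * N + A * -(N * (τ' • G₀) * N)) * S
        = γ • S - γ • (G t * (Omg n)ᵀ * S * Omg n * G t) := by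
      -- rewrite the quadratic term
      have hq : G t * (Omg n)ᵀ * S * Omg n * G t = A * N * (A * N * S) := by
        rw [hGt]
        calc A * N * S * (Omg n)ᵀ * S * Omg n * (A * N * S)
            = A * N * (S * (Omg n)ᵀ * S * Omg n) * (A * N * S) := by noncomm_ring
          _ = A * N * (A * N * S) := by rw [hSO, mul_one]
      rw [hq]
      -- pure algebra with the relations `M*N = 1`, `N*M = 1`
      have hS' : S = M - τ • G₀ := by rw [hM]; abel
      have hA' : A = τ • M + (1 - τ ^ 2) • G₀ := by
        rw [hA, hM]; match_scalars <;> ring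
      have e1 : A * N * S = τ • S + (1 - τ ^ 2) • (G₀ * N * S) := by
        calc A * N * S = (τ • M + (1 - τ ^ 2) • G₀) * N * S := by rw [← hA']
          _ = τ • (M * N * S) + (1 - τ ^ 2) • (G₀ * N * S) := by
              simp [add_mul, smul_mul_assoc]
          _ = τ • S + (1 - τ ^ 2) • (G₀ * N * S) := by rw [hMN, one_mul]
      have e2 : A * N * (A * N * S) = τ • (A * N * S) + (1 - τ ^ 2) • (A * N * (G₀ * N * S)) := by
        rw [e1]; simp only [mul_add, mul_smul_comm]; rw [e1]
      have e3 : S * N * S = S - τ • (G₀ * N * S) := by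
        calc S * N * S = (M - τ • G₀) * N * S := by rw [← hS']
          _ = M * N * S - τ • (G₀ * N * S) := by simp [sub_mul, smul_mul_assoc]
          _ = S - τ • (G₀ * N * S) := by rw [hMN, one_mul]
      have e4 : A * (N * (τ' • G₀) * N) * S = τ' • (A * N * (G₀ * N * S)) := by
        simp [mul_smul_comm, smul_mul_assoc, mul_assoc]
      calc (τ' • S * N + A * -(N * (τ' • G₀) * N)) * S
          = τ' • (S * N * S) - A * (N * (τ' • G₀) * N) * S := by noncomm_ring
        _ = τ' • (S - τ • (G₀ * N * S)) - τ' • (A * N * (G₀ * N * S)) := by rw [e3, e4]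
        _ = γ • S - γ • (τ • (A * N * S) + (1 - τ ^ 2) • (A * N * (G₀ * N * S))) := by
            rw [e1, hτ'def]; match_scalars <;> ring
        _ = γ • S - γ • (A * N * (A * N * S)) := by rw [← e2]
    -- assemble: project onto the `(i, j)` entry
    have hGF : (fun s => G s i j)
        = fun s => ((G₀ + Real.tanh (γ * s) • S) *
            Ring.inverse (Real.tanh (γ * s) • G₀ + S) * S) i j := by
      funext s; rw [hFG s]
    rw [hGF]
    let L : Matrix (Fin n ⊕ Fin n) (Fin n ⊕ Fin n) ℝ →L[ℝ] ℝ :=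
      LinearMap.toContinuousLinearMap
        { toFun := fun X => X i j, map_add' := fun _ _ => rfl, map_smul' := fun _ _ => rfl }
    have := L.hasFDerivAt.comp_hasDerivWithinAt (x := t) hF
    rw [hkey'] at this
    exact this
  · calc S = 1 * S := (one_mul S).symm
      _ = S * (Omg n)ᵀ * S * Omg n * S := by rw [← hSO]
end
end
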